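/- arXiv:2308.14239 — 2 statements merged into one kernel-verified Lean document; each statement's English description precedes it below -/
import Mathlib

section
/- Let A be a matrix, κ ≥ 1 its condition number, and let |b⟩, |b'⟩ be unit vectors with ‖|b⟩ − |b'⟩‖ ≤ δ/(2κ), where the singular values of A lie in [‖A‖/κ, ‖A‖]. If a unit vector |ψ⟩ satisfies ‖|ψ⟩ − A|b'⟩/‖A|b'⟩‖‖ ≤ δ/2, then ‖|ψ⟩ − A|b⟩/‖A|b⟩‖‖ ≤ δ. -/
open RCLike in
lemma my_aux {E : Type*} [NormedAddCommGroup E] [InnerProductSpace ℂ E]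
    (u v : E) (hu : u ≠ 0) (hv : v ≠ 0) :
    ‖‖u‖⁻¹ • u - ‖v‖⁻¹ • v‖ ≤ 2 * ‖u - v‖ / (‖u‖ + ‖v‖) := by
  set a := ‖u‖ with ha
  set b := ‖v‖ with hb
  have hapos : 0 < a := norm_pos_iff.mpr hu
  have hbpos : 0 < b := norm_pos_iff.mpr hv
  set t : ℝ := re (inner ℂ u v) with htdef
  have ht : -(a*b) ≤ t := by
    have h1 : |t| ≤ ‖(inner ℂ u v)‖ := abs_re_le_norm _
    have h2 : ‖(inner ℂ u v)‖ ≤ a * b := norm_inner_le_norm u v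
    have := (abs_le.mp (h1.trans h2)).1
    linarith
  have hd : ‖u - v‖ ^ 2 = a^2 + b^2 - 2*t := by
    rw [@norm_sub_sq ℂ]; ring
  have hre : re (inner ℂ ((a⁻¹ : ℝ) • u) ((b⁻¹ : ℝ) • v)) = a⁻¹ * b⁻¹ * t := by
    rw [real_smul_eq_coe_smul (K := ℂ) a⁻¹ u, real_smul_eq_coe_smul (K := ℂ) b⁻¹ v,
      inner_smul_real_left, inner_smul_real_right, smul_re, smul_re]
    simp only [smul_eq_mul, htdef]
    ring
  have hL2 : ‖‖u‖⁻¹ • u - ‖v‖⁻¹ • v‖ ^ 2 = 2 - 2 * (a⁻¹ * b⁻¹ * t) := by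
    rw [@norm_sub_sq ℂ, hre, norm_smul, norm_smul]
    rw [Real.norm_eq_abs, Real.norm_eq_abs, abs_of_pos (by positivity),
      abs_of_pos (by positivity), ← ha, ← hb, inv_mul_cancel₀ hapos.ne',
      inv_mul_cancel₀ hbpos.ne']
    ring
  have hkey : ‖‖u‖⁻¹ • u - ‖v‖⁻¹ • v‖ ^ 2 ≤ (2 * ‖u - v‖ / (a + b)) ^ 2 := by
    rw [hL2, div_pow, mul_pow, hd]
    have h1 : 2 - 2 * (a⁻¹ * b⁻¹ * t) = (2*(a*b) - 2*t) / (a*b) := by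
      field_simp
    rw [h1, div_le_div_iff₀ (by positivity) (by positivity)]
    nlinarith [mul_nonneg (sq_nonneg (a-b)) (by linarith : (0:ℝ) ≤ a*b + t),
      sq_nonneg (a-b), mul_pos hapos hbpos]
  exact le_of_pow_le_pow_left₀ two_ne_zero (by positivity) hkey


/-- Let `A` be an invertible operator on `ℂ^N` whose singular values lie in
`[‖A‖/κ, ‖A‖]` (equivalently, `(‖A‖/κ)·‖v‖ ≤ ‖A v‖` for all `v`), `κ ≥ 1`, and let
`b, b'` be unit vectors with `‖b − b'‖ ≤ δ/(2κ)` for some `δ ∈ (0,1]`. If a unit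
vector `ψ` satisfies `‖ψ − A b'/‖A b'‖‖ ≤ δ/2`, then `‖ψ − A b/‖A b‖‖ ≤ δ`. -/
theorem stmt11 (N : ℕ) (A : EuclideanSpace ℂ (Fin N) →L[ℂ] EuclideanSpace ℂ (Fin N))
    (hA : Function.Bijective A) (κ : ℝ) (hκ : 1 ≤ κ)
    (hsv : ∀ v : EuclideanSpace ℂ (Fin N), (‖A‖ / κ) * ‖v‖ ≤ ‖A v‖)
    (δ : ℝ) (hδ : 0 < δ) (hδ1 : δ ≤ 1)
    (b b' ψ : EuclideanSpace ℂ (Fin N))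
    (hb : ‖b‖ = 1) (hb' : ‖b'‖ = 1) (hψ : ‖ψ‖ = 1)
    (hclose : ‖b - b'‖ ≤ δ / (2 * κ))
    (happrox : ‖ψ - ‖A b'‖⁻¹ • A b'‖ ≤ δ / 2) :
    ‖ψ - ‖A b‖⁻¹ • A b‖ ≤ δ := by
  have hAb : A b ≠ 0 := fun h => by
    have : b = 0 := hA.injective (by simpa using h)
    simp [this] at hb
  have hAb' : A b' ≠ 0 := fun h => by
    have : b' = 0 := hA.injective (by simpa using h)
    simp [this] at hb'
  have hκpos : 0 < κ := lt_of_lt_of_le one_pos hκ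
  have hApos : 0 < ‖A‖ := by
    have h1 : 0 < ‖A b‖ := norm_pos_iff.mpr hAb
    have h2 : ‖A b‖ ≤ ‖A‖ := by
      have := A.le_opNorm b
      rwa [hb, mul_one] at this
    linarith
  set m := ‖A‖ / κ with hm
  have hmpos : 0 < m := div_pos hApos hκpos
  have ha1 : m ≤ ‖A b‖ := by simpa [hb] using hsv b
  have ha2 : m ≤ ‖A b'‖ := by simpa [hb'] using hsv b'
  have hdiff : ‖A b - A b'‖ ≤ m * (δ / 2) := by
    have h1 : ‖A (b - b')‖ ≤ ‖A‖ * ‖b - b'‖ := A.le_opNorm _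
    have h2 : ‖A‖ * ‖b - b'‖ ≤ ‖A‖ * (δ / (2 * κ)) :=
      mul_le_mul_of_nonneg_left hclose hApos.le
    have h3 : ‖A‖ * (δ / (2 * κ)) = m * (δ / 2) := by
      rw [hm]; ring
    calc ‖A b - A b'‖ = ‖A (b - b')‖ := by rw [map_sub]
      _ ≤ ‖A‖ * ‖b - b'‖ := h1
      _ ≤ ‖A‖ * (δ / (2 * κ)) := h2
      _ = m * (δ / 2) := h3
  have hnn : ‖‖A b'‖⁻¹ • A b' - ‖A b‖⁻¹ • A b‖ ≤ δ / 2 := by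
    have h0 := my_aux (A b') (A b) hAb' hAb
    have h1 : 2 * ‖A b' - A b‖ / (‖A b'‖ + ‖A b‖) ≤ 2 * (m * (δ / 2)) / (2 * m) := by
      apply div_le_div₀ (by nlinarith)
      · have : ‖A b' - A b‖ = ‖A b - A b'‖ := by rw [norm_sub_rev]
        linarith
      · linarith
      · linarith
    have h2 : 2 * (m * (δ / 2)) / (2 * m) = δ / 2 := by
      field_simp
    linarith
  calc ‖ψ - ‖A b‖⁻¹ • A b‖
      ≤ ‖ψ - ‖A b'‖⁻¹ • A b'‖ + ‖‖A b'‖⁻¹ • A b' - ‖A b‖⁻¹ • A b‖ := by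
        simpa using norm_sub_le_norm_sub_add_norm_sub ψ (‖A b'‖⁻¹ • A b') (‖A b‖⁻¹ • A b)
    _ ≤ δ / 2 + δ / 2 := add_le_add happrox hnn
    _ = δ := by ring
end

section
/- Let A be an invertible matrix with singular values in [‖A‖/κ, ‖A‖] for some κ ≥ 1, and let |b⟩, |b'⟩ be unit vectors. Then ‖A|b⟩/‖A|b⟩‖ − A|b'⟩/‖A|b'⟩‖‖ ≤ 2κ‖|b⟩ − |b'⟩‖. -/
/-- Key normalization inequality: for nonzero `x, y`,
`‖x/‖x‖ - y/‖y‖‖ ≤ 2 ‖x - y‖ / ‖x‖`. -/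
lemma aux_norm_normalize_sub {E : Type*} [NormedAddCommGroup E] [NormedSpace ℝ E]
    (x y : E) (hx : x ≠ 0) (hy : y ≠ 0) :
    ‖‖x‖⁻¹ • x - ‖y‖⁻¹ • y‖ ≤ 2 * ‖x - y‖ / ‖x‖ := by
  have hxn : (0:ℝ) < ‖x‖ := norm_pos_iff.mpr hx
  have hyn : (0:ℝ) < ‖y‖ := norm_pos_iff.mpr hy
  have key : ‖x‖⁻¹ • x - ‖y‖⁻¹ • y = ‖x‖⁻¹ • (x - y) + (‖x‖⁻¹ - ‖y‖⁻¹) • y := by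
    rw [smul_sub, sub_smul]; abel
  rw [key]
  calc ‖‖x‖⁻¹ • (x - y) + (‖x‖⁻¹ - ‖y‖⁻¹) • y‖
      ≤ ‖‖x‖⁻¹ • (x - y)‖ + ‖(‖x‖⁻¹ - ‖y‖⁻¹) • y‖ := norm_add_le _ _
    _ = ‖x‖⁻¹ * ‖x - y‖ + |‖x‖⁻¹ - ‖y‖⁻¹| * ‖y‖ := by
        rw [norm_smul, norm_smul, Real.norm_eq_abs, Real.norm_eq_abs,
          abs_of_pos (inv_pos.mpr hxn)]
    _ ≤ ‖x‖⁻¹ * ‖x - y‖ + ‖x‖⁻¹ * ‖x - y‖ := by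
        gcongr _ + ?_
        have h1 : ‖x‖⁻¹ - ‖y‖⁻¹ = (‖y‖ - ‖x‖) / (‖x‖ * ‖y‖) := by
          field_simp
        have h2 : |‖x‖⁻¹ - ‖y‖⁻¹| * ‖y‖ = |‖y‖ - ‖x‖| / ‖x‖ := by
          rw [h1, abs_div, abs_of_pos (mul_pos hxn hyn)]
          field_simp
        rw [h2, div_le_iff₀ hxn, inv_mul_eq_div, div_mul_cancel₀ _ hxn.ne']
        calc |‖y‖ - ‖x‖| ≤ ‖y - x‖ := abs_norm_sub_norm_le _ _
          _ = ‖x - y‖ := norm_sub_rev _ _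
    _ = 2 * ‖x - y‖ / ‖x‖ := by ring
  
/-- Let `A` be an invertible operator on `ℂ^N` with singular values in `[‖A‖/κ, ‖A‖]`
for some `κ ≥ 1` (equivalently, `(‖A‖/κ)·‖v‖ ≤ ‖A v‖` for all `v`). Then for unit
vectors `b, b'`, `‖A b/‖A b‖ − A b'/‖A b'‖‖ ≤ 2κ·‖b − b'‖`. -/
theorem stmt12 (N : ℕ) (A : EuclideanSpace ℂ (Fin N) →L[ℂ] EuclideanSpace ℂ (Fin N))
    (hA : Function.Bijective A) (κ : ℝ) (hκ : 1 ≤ κ)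
    (hsv : ∀ v : EuclideanSpace ℂ (Fin N), (‖A‖ / κ) * ‖v‖ ≤ ‖A v‖)
    (b b' : EuclideanSpace ℂ (Fin N)) (hb : ‖b‖ = 1) (hb' : ‖b'‖ = 1) :
    ‖‖A b‖⁻¹ • A b - ‖A b'‖⁻¹ • A b'‖ ≤ 2 * κ * ‖b - b'‖ := by
  have hκ0 : (0:ℝ) < κ := lt_of_lt_of_le one_pos hκ
  have hb0 : b ≠ 0 := by intro h; rw [h, norm_zero] at hb; norm_num at hb
  have hb'0 : b' ≠ 0 := by intro h; rw [h, norm_zero] at hb'; norm_num at hb'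
  have hAn : (0:ℝ) < ‖A‖ := by
    by_contra h
    push_neg at h
    have : ‖A‖ = 0 := le_antisymm h (norm_nonneg _)
    have hA0 : A = 0 := by rwa [norm_eq_zero] at this
    have : A b = A 0 := by simp [hA0]
    exact hb0 (hA.injective this)
  have hx : A b ≠ 0 := by
    intro h
    exact hb0 (hA.injective (by simp [h]))
  have hy : A b' ≠ 0 := by
    intro h
    exact hb'0 (hA.injective (by simp [h]))
  have hxlow : ‖A‖ / κ ≤ ‖A b‖ := by
    have := hsv b; rwa [hb, mul_one] at this
  have hxy : ‖A b - A b'‖ ≤ ‖A‖ * ‖b - b'‖ := by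
    rw [← map_sub]; exact A.le_opNorm _
  calc ‖‖A b‖⁻¹ • A b - ‖A b'‖⁻¹ • A b'‖
      ≤ 2 * ‖A b - A b'‖ / ‖A b‖ := aux_norm_normalize_sub _ _ hx hy
    _ ≤ 2 * (‖A‖ * ‖b - b'‖) / (‖A‖ / κ) := by
        exact div_le_div₀ (by positivity) (by linarith) (div_pos hAn hκ0) hxlow
    _ = 2 * κ * ‖b - b'‖ := by
        obtain ⟨a, ha⟩ : ∃ a : ℝ, ‖A‖ = a := ⟨_, rfl⟩
        rw [ha] at hAn ⊢
        field_simp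
end
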